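/- Let Γ̄₁^i(𝔑) = {[[a,b],[c,d]] ∈ SL₂(O_F) : a, d ∈ 1 + 𝔑, b ∈ 𝔞_i, c ∈ 𝔑𝔞_i^{-1}}. For b ∈ F and c ∈ 𝔞_i^{-1}𝔑, the matrix γ_c = [[1,0],[c,1]] lies in Γ̄₁^i(𝔑) (at the infinite place), and in relative homology H₁(X₁^i(𝔑), C₁^i(𝔑), ℤ) one has the identity {∞, b}_{Γ̄₁^i(𝔑)} = γ_c{∞, 0}_{Γ̄₁^i(𝔑)} + {0, ∞}_{Γ̄₁^i(𝔑)} + {∞, b/(bc+1)}_{Γ̄₁^i(𝔑)}, provided bc + 1 ≠ 0. In particular, if b = β/α^n and c ∈ 𝔑∏_j 𝔞_j^{-1} is chosen with b/(bc+1) = β/α̃^n for another generator α̃, then {∞, β/α^n}_{Γ̄} and {∞, β/α̃^n}_{Γ̄} differ by the boundary-trivial cycle γ_c{∞,0} + {0,∞}, and are equal when γ_c ∈ Γ̄₁^i(𝔑). -/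
import Mathlib


open NumberField

/-!  **Statement 19.**  (a) With
`Γ̄₁^i(𝔑) = {[[a,b],[c,d]] ∈ SL₂(O_F) : a,d ∈ 1+𝔑, b ∈ 𝔞_i, c ∈ 𝔑𝔞_i⁻¹}` described by
the submodules `𝔑set` (= `𝔑`), `𝔞set` (= `𝔞_i`), `𝔠set` (= `𝔑𝔞_i⁻¹`) of `F`, the matrix
`γ_c = [[1,0],[c,1]]` satisfies the defining conditions for any `c ∈ 𝔑𝔞_i⁻¹`.
(b) Modular symbols: `H = H₁(X₁^i(𝔑), C₁^i(𝔑), ℤ)`, `s α β = {α,β}_{Γ̄₁^i(𝔑)}` with the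
standard relations (`hrel₁`–`hrel₃` of Statement 6), `P = ℙ¹(F)` with the Möbius action
of `G = Γ̄₁^i(𝔑)`.  For `γ = γ_c` fixing the cusp `z₀ = 0` (`γ_c·0 = 0`; note
`γ_c·∞ = 1/c`, `γ_c·b = b/(bc+1)`), one has
`{∞, b} = γ_c{∞, 0} + {0, ∞} + {∞, b/(bc+1)}`, i.e.
`s ∞ b = s (γ•∞) (γ•0) + s 0 ∞ + s ∞ (γ•b)`; in particular `{∞, b}` and `{∞, γ_c·b}`
differ by the cycle `γ_c{∞,0} + {0,∞}`, and since `γ_c ∈ Γ̄₁^i(𝔑)` they are equal: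
`s ∞ b = s ∞ (γ•b)`. -/
theorem stmt19 (K : Type*) [Field K] [NumberField K]
    (𝔑set 𝔞set 𝔠set : Submodule (𝓞 K) K)
    -- the modular symbol setup
    (H : Type*) [AddCommGroup H]
    (G : Type*) [Group G] (P : Type*) [MulAction G P]
    (s : P → P → H)
    (hrel₁ : ∀ α : P, s α α = 0)
    (hrel₂ : ∀ α₁ α₂ α₃ : P, s α₁ α₂ = s α₁ α₃ + s α₃ α₂)
    (hrel₃ : ∀ (γ : G) (α β : P), s (γ • α) (γ • β) = s α β) :
    -- (a) γ_c = [[1,0],[c,1]] lies in Γ̄₁^i(𝔑)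
    (∀ c : K, c ∈ 𝔠set →
      Matrix.det !![(1 : K), 0; c, 1] = 1 ∧
      (!![(1 : K), 0; c, 1]) 0 0 - 1 ∈ 𝔑set ∧
      (!![(1 : K), 0; c, 1]) 1 1 - 1 ∈ 𝔑set ∧
      (!![(1 : K), 0; c, 1]) 0 1 ∈ 𝔞set ∧
      (!![(1 : K), 0; c, 1]) 1 0 ∈ 𝔠set) ∧
    -- (b) the modular symbol identity for γ fixing the cusp z₀ ( = 0 )
    (∀ (γ : G) (inf z₀ b : P), γ • z₀ = z₀ →
      s inf b = s (γ • inf) (γ • z₀) + s z₀ inf + s inf (γ • b) ∧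
      s inf b = s inf (γ • b)) := by
  refine ⟨fun c hc => ?_, fun γ inf z₀ b hz => ?_⟩
  · refine ⟨by simp [Matrix.det_fin_two_of], by simpa using 𝔑set.zero_mem,
      by simpa using 𝔑set.zero_mem, by simpa using 𝔞set.zero_mem, by simpa using hc⟩
  · have key : s inf b = s inf (γ • b) := by
      have h1 : s z₀ (γ • b) = s z₀ b := by
        conv_lhs => rw [← hz]
        exact hrel₃ γ z₀ b
      rw [hrel₂ inf b z₀, hrel₂ inf (γ • b) z₀, h1]
    refine ⟨?_, key⟩
    rw [hrel₃ γ inf z₀]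
    have : s inf z₀ + s z₀ inf = 0 := by rw [← hrel₂ inf inf z₀, hrel₁]
    rw [add_assoc, ← add_assoc (s inf z₀), this, zero_add, ← key]
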